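/- Let E be a real inner product space, T ≥ 1, γ_t learning rates with 0 < γ_t ≤ 2/β, and for each t let f_t, f'_t : E → ℝ be convex, differentiable with β-Lipschitz gradient, and with gradients bounded by L (‖∇f_t(x)‖ ≤ L and ‖∇f'_t(x)‖ ≤ L for all x). Let D ⊆ {0, …, T−1} and assume f_t = f'_t for every t ∉ D. Define two gradient descent trajectories y_0 = y'_0, y_{t+1} = y_t − γ_t·∇f_t(y_t), y'_{t+1} = y'_t − γ_t·∇f'_t(y'_t). Then ‖y_T − y'_T‖ ≤ 2L·∑_{t ∈ D} γ_t. -/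

import Mathlib

open scoped RealInnerProductSpace

set_option linter.unusedSectionVars false

section aux
variable {E : Type*} [NormedAddCommGroup E] [InnerProductSpace ℝ E] [CompleteSpace E]

lemma line_hasDerivAt (x v : E) (t : ℝ) : HasDerivAt (fun s : ℝ => x + s • v) v t := by
  simpa using ((hasDerivAt_id t).smul_const v).const_add x

lemma comp_line_hasDerivAt {g : E → ℝ} {G : E → E} (hg : ∀ z, HasGradientAt g (G z) z)
    (x v : E) (t : ℝ) :
    HasDerivAt (fun s : ℝ => g (x + s • v)) ⟪G (x + t • v), v⟫ t := by
  have h1 := (hg (x + t • v)).hasFDerivAt.comp_hasDerivAt t (line_hasDerivAt x v t)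
  simp [InnerProductSpace.toDual_apply_apply] at h1
  exact h1

lemma convex_grad_ineq {g : E → ℝ} {G : E → E} (hconv : ConvexOn ℝ Set.univ g)
    (hg : ∀ z, HasGradientAt g (G z) z) (x y : E) :
    g x + ⟪G x, y - x⟫ ≤ g y := by
  have hline : HasDerivAt (fun s : ℝ => g (x + s • (y - x))) ⟪G x, y - x⟫ 0 := by
    simpa using comp_line_hasDerivAt hg x (y - x) 0
  have hcomp : ConvexOn ℝ Set.univ (fun s : ℝ => g (x + s • (y - x))) := by
    have h := hconv.comp_affineMap (AffineMap.lineMap x y : ℝ →ᵃ[ℝ] E)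
    have he : (fun s : ℝ => g (x + s • (y - x))) = g ∘ (AffineMap.lineMap x y : ℝ →ᵃ[ℝ] E) := by
      funext s
      simp [AffineMap.lineMap_apply, add_comm]
    rw [he]
    simpa using h
  have hs := hcomp.le_slope_of_hasDerivAt (Set.mem_univ (0:ℝ)) (Set.mem_univ (1:ℝ))
    zero_lt_one hline
  rw [slope_def_field] at hs
  simp at hs
  linarith

lemma descent_lemma {g : E → ℝ} {G : E → E} {β : ℝ} (hβ : 0 < β)
    (hg : ∀ z, HasGradientAt g (G z) z)
    (hlip : ∀ a b, ‖G a - G b‖ ≤ β * ‖a - b‖) (x y : E) :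
    g y ≤ g x + ⟪G x, y - x⟫ + β / 2 * ‖y - x‖ ^ 2 := by
  set v := y - x with hv
  set ψ : ℝ → ℝ := fun t => g (x + t • v) - t * ⟪G x, v⟫ - β * t ^ 2 / 2 * ‖v‖ ^ 2 with hψ
  have hψd : ∀ t : ℝ, HasDerivAt ψ (⟪G (x + t • v) - G x, v⟫ - β * t * ‖v‖ ^ 2) t := by
    intro t
    have h1 := comp_line_hasDerivAt hg x v t
    have h2 : HasDerivAt (fun t : ℝ => t * ⟪G x, v⟫) ⟪G x, v⟫ t := by
      simpa using (hasDerivAt_id t).mul_const ⟪G x, v⟫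
    have h3 : HasDerivAt (fun t : ℝ => β * t ^ 2 / 2 * ‖v‖ ^ 2) (β * t * ‖v‖ ^ 2) t := by
      have h4 : HasDerivAt (fun t : ℝ => t ^ 2) (2 * t) t := by simpa using hasDerivAt_pow 2 t
      have h5 := ((h4.const_mul β).div_const 2).mul_const (‖v‖ ^ 2)
      exact h5.congr_deriv (by ring)
    have h6 := (h1.sub h2).sub h3
    exact h6.congr_deriv (by rw [inner_sub_left])
  have hanti : AntitoneOn ψ (Set.Icc (0:ℝ) 1) := by
    apply antitoneOn_of_deriv_nonpos (convex_Icc 0 1)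
    · exact fun t _ => (hψd t).continuousAt.continuousWithinAt
    · exact fun t _ => ((hψd t).differentiableAt).differentiableWithinAt
    · intro t ht
      rw [interior_Icc] at ht
      rw [(hψd t).deriv]
      have hip : ⟪G (x + t • v) - G x, v⟫ ≤ β * t * ‖v‖ ^ 2 := by
        calc ⟪G (x + t • v) - G x, v⟫ ≤ ‖G (x + t • v) - G x‖ * ‖v‖ := real_inner_le_norm _ _
          _ ≤ (β * ‖(x + t • v) - x‖) * ‖v‖ := by
              have := hlip (x + t • v) x
              have hn : (0:ℝ) ≤ ‖v‖ := norm_nonneg _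
              nlinarith
          _ = β * t * ‖v‖ ^ 2 := by
              have : (x + t • v) - x = t • v := by abel
              rw [this, norm_smul, Real.norm_eq_abs, abs_of_pos ht.1]
              ring
      linarith
  have h01 := hanti (Set.mem_Icc.mpr ⟨le_refl 0, zero_le_one⟩)
    (Set.mem_Icc.mpr ⟨zero_le_one, le_refl 1⟩) zero_le_one
  have h0 : ψ 0 = g x := by simp [hψ]
  have h1' : ψ 1 = g y - ⟪G x, v⟫ - β / 2 * ‖v‖ ^ 2 := by
    have hxy : x + v = y := by rw [hv]; abel
    simp [hψ, hxy]
  rw [h0, h1'] at h01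
  linarith

lemma cocoercivity {g : E → ℝ} {G : E → E} {β : ℝ} (hβ : 0 < β)
    (hconv : ConvexOn ℝ Set.univ g) (hg : ∀ z, HasGradientAt g (G z) z)
    (hlip : ∀ a b, ‖G a - G b‖ ≤ β * ‖a - b‖) (x y : E) :
    (1 / β) * ‖G x - G y‖ ^ 2 ≤ ⟪G x - G y, x - y⟫ := by
  have half : ∀ a b : E, g a + ⟪G a, b - a⟫ + 1 / (2 * β) * ‖G b - G a‖ ^ 2 ≤ g b := by
    intro a b
    set c := G a with hc
    set φ : E → ℝ := fun z => g z - ⟪c, z⟫ with hφ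
    set Φ : E → E := fun z => G z - c with hΦ
    have hφg : ∀ z, HasGradientAt φ (Φ z) z := by
      intro z
      rw [hasGradientAt_iff_hasFDerivAt]
      have h1 := (hg z).hasFDerivAt
      have h2 : HasFDerivAt (fun w : E => ⟪c, w⟫) (innerSL ℝ c) z := (innerSL ℝ c).hasFDerivAt
      have h3 := h1.sub h2
      refine h3.congr_fderiv ?_
      ext w
      simp [InnerProductSpace.toDual_apply_apply, inner_sub_left, hΦ]
    have hφlip : ∀ u w, ‖Φ u - Φ w‖ ≤ β * ‖u - w‖ := by
      intro u w
      have : Φ u - Φ w = G u - G w := by rw [hΦ]; simp only [sub_sub_sub_cancel_right]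
      rw [this]; exact hlip u w
    have hmin : ∀ z, φ a ≤ φ z := by
      intro z
      have h4 := convex_grad_ineq hconv hg a z
      have h5 : ⟪G a, z - a⟫ = ⟪c, z⟫ - ⟪c, a⟫ := by rw [inner_sub_right, hc]
      simp only [hφ]
      linarith
    set w := b - β⁻¹ • Φ b with hw
    have hd := descent_lemma hβ hφg hφlip b w
    have hwb : w - b = -(β⁻¹ • Φ b) := by rw [hw]; abel
    have hips : ⟪Φ b, w - b⟫ = -(β⁻¹ * ‖Φ b‖ ^ 2) := by
      rw [hwb, inner_neg_right, real_inner_smul_right, real_inner_self_eq_norm_sq]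
    have hns : ‖w - b‖ ^ 2 = β⁻¹ ^ 2 * ‖Φ b‖ ^ 2 := by
      rw [hwb, norm_neg, norm_smul, Real.norm_eq_abs, abs_of_pos (by positivity : (0:ℝ) < β⁻¹)]
      ring
    rw [hips, hns] at hd
    have hmw := hmin w
    have hφa : φ a = g a - ⟪c, a⟫ := rfl
    have hφb : φ b = g b - ⟪c, b⟫ := rfl
    have hΦb : ‖Φ b‖ = ‖G b - G a‖ := by rw [hΦ, hc]
    have hib : ⟪c, b⟫ - ⟪c, a⟫ = ⟪c, b - a⟫ := by rw [inner_sub_right]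
    have hβ0 : β ≠ 0 := ne_of_gt hβ
    rw [hφa] at hmw
    rw [hφb] at hd
    rw [hΦb] at hd
    have hd2 : φ w ≤ g b - ⟪c, b⟫ - 1 / (2 * β) * ‖G b - G a‖ ^ 2 := by
      refine hd.trans (le_of_eq ?_)
      field_simp
      ring
    have hgc : ‖G b - c‖ = ‖G b - G a‖ := by rw [hc]
    rw [hgc]
    clear_value c φ Φ w
    linarith [hmw, hd2, hib]
  have h1 := half x y
  have h2 := half y x
  have e1 : ⟪G x, y - x⟫ = ⟪G x, y⟫ - ⟪G x, x⟫ := inner_sub_right _ _ _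
  have e2 : ⟪G y, x - y⟫ = ⟪G y, x⟫ - ⟪G y, y⟫ := inner_sub_right _ _ _
  have e3 : ⟪G x - G y, x - y⟫ = ⟪G x, x⟫ - ⟪G x, y⟫ - ⟪G y, x⟫ + ⟪G y, y⟫ := by
    rw [inner_sub_left, inner_sub_right, inner_sub_right]
    ring
  have e4 : ‖G y - G x‖ = ‖G x - G y‖ := norm_sub_rev _ _
  rw [e3]
  rw [e1] at h1
  rw [e2] at h2
  rw [e4] at h1
  have hsplit : 1 / β = 1 / (2 * β) + 1 / (2 * β) := by field_simp; ring
  rw [hsplit, add_mul]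
  linarith

lemma step_nonexpansive {g : E → ℝ} {G : E → E} {β γ : ℝ} (hβ : 0 < β)
    (hconv : ConvexOn ℝ Set.univ g) (hg : ∀ z, HasGradientAt g (G z) z)
    (hlip : ∀ a b, ‖G a - G b‖ ≤ β * ‖a - b‖) (hγ0 : 0 < γ) (hγ : γ ≤ 2 / β) (x y : E) :
    ‖(x - γ • G x) - (y - γ • G y)‖ ≤ ‖x - y‖ := by
  have key : ‖(x - γ • G x) - (y - γ • G y)‖ ^ 2 ≤ ‖x - y‖ ^ 2 := by
    have hre : (x - γ • G x) - (y - γ • G y) = (x - y) - γ • (G x - G y) := by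
      rw [smul_sub]; abel
    rw [hre, norm_sub_sq_real]
    have hco := cocoercivity hβ hconv hg hlip x y
    have h1 : ⟪x - y, γ • (G x - G y)⟫ = γ * ⟪G x - G y, x - y⟫ := by
      rw [real_inner_smul_right, real_inner_comm]
    have h2 : ‖γ • (G x - G y)‖ ^ 2 = γ ^ 2 * ‖G x - G y‖ ^ 2 := by
      rw [norm_smul, Real.norm_eq_abs, abs_of_pos hγ0]; ring
    rw [h1, h2]
    have hb1 : γ * ((1 / β) * ‖G x - G y‖ ^ 2) ≤ γ * ⟪G x - G y, x - y⟫ :=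
      mul_le_mul_of_nonneg_left hco hγ0.le
    have hgg : γ * γ ≤ γ * (2 / β) := mul_le_mul_of_nonneg_left hγ hγ0.le
    have hq : γ ^ 2 * ‖G x - G y‖ ^ 2 ≤ γ * (2 / β) * ‖G x - G y‖ ^ 2 := by
      have h5 : γ ^ 2 ≤ γ * (2 / β) := by rw [sq]; exact hgg
      exact mul_le_mul_of_nonneg_right h5 (sq_nonneg _)
    have e : γ * (2 / β) * ‖G x - G y‖ ^ 2 = 2 * (γ * ((1 / β) * ‖G x - G y‖ ^ 2)) := by
      ring
    linarith [hb1, hq, e.le, e.ge]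
  nlinarith [key, norm_nonneg ((x - γ • G x) - (y - γ • G y)), norm_nonneg (x - y)]



end aux


/-- coupling bound for two gradient descent trajectories driven by per-step
convex β-smooth losses with L-bounded gradients, which coincide outside a set `D ⊆ {0,…,T-1}`
of steps, with learning rates `0 < γ t ≤ 2/β`:
`‖y T - y' T‖ ≤ 2L ∑_{t ∈ D} γ t`. -/
theorem gd_trajectories_coupling_bound
    {E : Type*} [NormedAddCommGroup E] [InnerProductSpace ℝ E] [CompleteSpace E]
    (T : ℕ) (hT : 1 ≤ T) (β L : ℝ) (hβ : 0 < β) (γ : ℕ → ℝ)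
    (hγ : ∀ t, 0 < γ t ∧ γ t ≤ 2 / β)
    (f f' : ℕ → E → ℝ)
    (hconv : ∀ t, ConvexOn ℝ Set.univ (f t)) (hconv' : ∀ t, ConvexOn ℝ Set.univ (f' t))
    (hdiff : ∀ t, Differentiable ℝ (f t)) (hdiff' : ∀ t, Differentiable ℝ (f' t))
    (hsmooth : ∀ t x y, ‖gradient (f t) x - gradient (f t) y‖ ≤ β * ‖x - y‖)
    (hsmooth' : ∀ t x y, ‖gradient (f' t) x - gradient (f' t) y‖ ≤ β * ‖x - y‖)
    (hL : ∀ t x, ‖gradient (f t) x‖ ≤ L) (hL' : ∀ t x, ‖gradient (f' t) x‖ ≤ L)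
    (D : Finset ℕ) (hD : D ⊆ Finset.range T)
    (hsame : ∀ t < T, t ∉ D → f t = f' t)
    (y y' : ℕ → E) (hy0 : y 0 = y' 0)
    (hy : ∀ t, y (t + 1) = y t - γ t • gradient (f t) (y t))
    (hy' : ∀ t, y' (t + 1) = y' t - γ t • gradient (f' t) (y' t)) :
    ‖y T - y' T‖ ≤ 2 * L * ∑ t ∈ D, γ t := by
  have hL0 : 0 ≤ L := le_trans (norm_nonneg _) (hL 0 (y 0))
  have hGrad : ∀ t z, HasGradientAt (f t) (gradient (f t) z) z :=
    fun t z => ((hdiff t) z).hasGradientAt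
  have key : ∀ t, t ≤ T → ‖y t - y' t‖ ≤ 2 * L * ∑ s ∈ D.filter (· < t), γ s := by
    intro t
    induction t with
    | zero =>
      intro _
      simp [hy0, Nat.not_lt_zero]
    | succ t ih =>
      intro ht
      have htT : t < T := ht
      have hprev := ih (le_of_lt htT)
      by_cases hmem : t ∈ D
      · have hγt := (hγ t).1
        have hstep : ‖y (t + 1) - y' (t + 1)‖ ≤ ‖y t - y' t‖ + γ t * (2 * L) := by
          rw [hy t, hy' t]
          have hre : (y t - γ t • gradient (f t) (y t)) - (y' t - γ t • gradient (f' t) (y' t))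
              = (y t - y' t) - (γ t • gradient (f t) (y t) - γ t • gradient (f' t) (y' t)) := by
            abel
          rw [hre]
          have hn1 : ‖γ t • gradient (f t) (y t)‖ ≤ γ t * L := by
            rw [norm_smul, Real.norm_eq_abs, abs_of_pos hγt]
            exact mul_le_mul_of_nonneg_left (hL t (y t)) hγt.le
          have hn2 : ‖γ t • gradient (f' t) (y' t)‖ ≤ γ t * L := by
            rw [norm_smul, Real.norm_eq_abs, abs_of_pos hγt]
            exact mul_le_mul_of_nonneg_left (hL' t (y' t)) hγt.le
          calc ‖(y t - y' t) - (γ t • gradient (f t) (y t) - γ t • gradient (f' t) (y' t))‖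
              ≤ ‖y t - y' t‖ + ‖γ t • gradient (f t) (y t) - γ t • gradient (f' t) (y' t)‖ :=
                norm_sub_le _ _
            _ ≤ ‖y t - y' t‖ +
                (‖γ t • gradient (f t) (y t)‖ + ‖γ t • gradient (f' t) (y' t)‖) := by
                have := norm_sub_le (γ t • gradient (f t) (y t)) (γ t • gradient (f' t) (y' t))
                linarith
            _ ≤ ‖y t - y' t‖ + γ t * (2 * L) := by linarith
        have hsum : ∑ s ∈ D.filter (· < t + 1), γ s = γ t + ∑ s ∈ D.filter (· < t), γ s := by
          have hins : D.filter (· < t + 1) = insert t (D.filter (· < t)) := by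
            ext a
            simp only [Finset.mem_filter, Finset.mem_insert]
            constructor
            · rintro ⟨haD, hlt⟩
              rcases Nat.lt_succ_iff_lt_or_eq.mp hlt with h | h
              · exact Or.inr ⟨haD, h⟩
              · exact Or.inl h
            · rintro (rfl | ⟨haD, hlt⟩)
              · exact ⟨hmem, Nat.lt_succ_self a⟩
              · exact ⟨haD, Nat.lt_succ_of_lt hlt⟩
          rw [hins, Finset.sum_insert (by simp)]
        rw [hsum]
        calc ‖y (t + 1) - y' (t + 1)‖ ≤ ‖y t - y' t‖ + γ t * (2 * L) := hstep
          _ ≤ 2 * L * ∑ s ∈ D.filter (· < t), γ s + γ t * (2 * L) := by linarith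
          _ = 2 * L * (γ t + ∑ s ∈ D.filter (· < t), γ s) := by ring
      · have hfe := hsame t htT hmem
        have hstep : ‖y (t + 1) - y' (t + 1)‖ ≤ ‖y t - y' t‖ := by
          rw [hy t, hy' t, ← hfe]
          exact step_nonexpansive hβ (hconv t) (hGrad t) (hsmooth t) (hγ t).1 (hγ t).2
            (y t) (y' t)
        have hsum : D.filter (· < t + 1) = D.filter (· < t) := by
          ext a
          simp only [Finset.mem_filter]
          constructor
          · rintro ⟨haD, hlt⟩
            refine ⟨haD, ?_⟩
            rcases Nat.lt_succ_iff_lt_or_eq.mp hlt with h | h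
            · exact h
            · exact absurd (h ▸ haD) hmem
          · rintro ⟨haD, hlt⟩
            exact ⟨haD, Nat.lt_succ_of_lt hlt⟩
        rw [hsum]
        exact le_trans hstep hprev
  have hfin := key T le_rfl
  have hDT : D.filter (· < T) = D :=
    Finset.filter_true_of_mem (fun a ha => Finset.mem_range.mp (hD ha))
  rwa [hDT] at hfin
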